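/- arXiv:1707.03342 — 2 statements merged into one kernel-verified Lean document; each statement's English description precedes it below -/
import Mathlib

section
/- Let α < 0 < β, 0 < ε < 8/(β−α), and suppose k ∈ ℤ and p < q satisfy ε(k + 1/4) ≤ p ≤ ε(k + 3/4) ≤ q ≤ ε(k + 5/4) and ℓ := q − p < ε. Set ℓ_β := ε(k + 3/4) − p, ℓ_α := q − ε(k + 3/4), and v := (α ℓ_α + β ℓ_β)/ℓ. Then the function n(x) := 1 + ∫_p^x (v − g(s/ε)) ds satisfies n(q) = 1 and −1 ≤ n(x) ≤ 1 for every x ∈ [p,q]; in particular the edge [p,q] with endpoint values n(p) = n(q) = 1 is calibrable with velocity v = (α ℓ_α + β ℓ_β)/(ℓ_α + ℓ_β). -/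
open MeasureTheory Set

/-- The 1-periodic forcing term: `α` within distance `1/4` of the integers, `β` otherwise. -/
noncomputable def g (α β x : ℝ) : ℝ := if |x - (round x : ℝ)| ≤ 1/4 then α else β

/-- The edge `[p,q]` with endpoint values `a`, `b` is calibrated with velocity `v` by the
Lipschitz field `n : [p,q] → [-1,1]` satisfying `n' = v - g(·/ε)` a.e. on `[p,q]`. -/
def Calibrates (α β ε p q a b v : ℝ) (n : ℝ → ℝ) : Prop :=
  (∃ K : NNReal, LipschitzOnWith K n (Icc p q)) ∧
  (∀ x ∈ Icc p q, n x ∈ Icc (-1 : ℝ) 1) ∧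
  n p = a ∧ n q = b ∧
  ∀ᵐ x ∂(volume.restrict (Icc p q)), HasDerivAt n (v - g α β (x / ε)) x

lemma g_meas (α β : ℝ) : Measurable (g α β) := by
  unfold g
  refine Measurable.ite ?_ measurable_const measurable_const
  have hr : Measurable fun x : ℝ => ((round x : ℤ) : ℝ) := by
    have : Measurable fun x : ℝ => round x := by
      simp only [round_eq]
      exact (measurable_id.add_const _).floor
    exact measurable_from_top.comp this
  exact measurableSet_le ((measurable_id.sub hr).abs) measurable_const

lemma g_lo (α β : ℝ) {t : ℝ} {k : ℤ} (h1 : (k:ℝ) + 1/4 < t) (h2 : t < (k:ℝ) + 3/4) :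
    g α β t = β := by
  unfold g
  rw [if_neg]
  push_neg
  rcases le_or_gt ((round t : ℤ):ℝ) (k:ℝ) with hj | hj
  · calc (1:ℝ)/4 < t - k := by linarith
      _ ≤ t - round t := by linarith
      _ ≤ |t - round t| := le_abs_self _
  · have hj' : (k:ℝ) + 1 ≤ round t := by
      exact_mod_cast Int.lt_iff_add_one_le.mp (by exact_mod_cast hj)
    calc (1:ℝ)/4 < (k+1) - t := by linarith
      _ ≤ (round t : ℝ) - t := by linarith
      _ ≤ |t - round t| := by rw [abs_sub_comm]; exact le_abs_self _

lemma g_hi (α β : ℝ) {t : ℝ} {k : ℤ} (h1 : (k:ℝ) + 3/4 < t) (h2 : t < (k:ℝ) + 5/4) :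
    g α β t = α := by
  unfold g
  rw [if_pos]
  calc |t - round t| ≤ |t - ((k+1 : ℤ):ℝ)| := round_le t (k+1)
    _ ≤ 1/4 := by rw [abs_le]; push_cast; constructor <;> linarith

set_option maxHeartbeats 1600000 in
theorem stmt1 (α β ε p q : ℝ) (k : ℤ) (hα : α < 0) (hβ : 0 < β)
    (hε0 : 0 < ε) (hε : ε < 8 / (β - α)) (hpq : p < q)
    (h1 : ε * (k + 1/4) ≤ p) (h2 : p ≤ ε * (k + 3/4)) (h3 : ε * (k + 3/4) ≤ q)
    (h4 : q ≤ ε * (k + 5/4)) (hl : q - p < ε)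
    (lα lβ v : ℝ) (hlβ : lβ = ε * (k + 3/4) - p) (hlα : lα = q - ε * (k + 3/4))
    (hv : v = (α * lα + β * lβ) / (q - p))
    (n : ℝ → ℝ) (hn : n = fun x => 1 + ∫ s in p..x, (v - g α β (s / ε))) :
    n q = 1 ∧ (∀ x ∈ Icc p q, -1 ≤ n x ∧ n x ≤ 1) ∧
    Calibrates α β ε p q 1 1 v n ∧ v = (α * lα + β * lβ) / (lα + lβ) := by
  have hβα : 0 < β - α := by linarith
  have hℓ : 0 < q - p := by linarith
  have hsum : lα + lβ = q - p := by rw [hlα, hlβ]; ring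
  have hlβ0 : 0 ≤ lβ := by rw [hlβ]; linarith
  have hlα0 : 0 ≤ lα := by rw [hlα]; linarith
  have hvmul : v * (q - p) = α * lα + β * lβ := by
    rw [hv]; field_simp
  have hεβ : ε * (β - α) < 8 := (lt_div_iff₀ hβα).mp hε
  set m : ℝ := ε * (k + 3/4) with hmdef
  have hf_meas : Measurable fun s : ℝ => v - g α β (s / ε) :=
    measurable_const.sub ((g_meas α β).comp (measurable_id.div_const ε))
  set f : ℝ → ℝ := fun s => v - g α β (s / ε) with hfdef
  have hfb : ∀ s : ℝ, ‖f s‖ ≤ |v - α| + |v - β| := by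
    intro s
    have hfs : f s = v - α ∨ f s = v - β := by
      rw [hfdef]; unfold g; dsimp only; split
      · left; rfl
      · right; rfl
    rcases hfs with h | h <;> rw [Real.norm_eq_abs, h]
    · linarith [abs_nonneg (v - β), le_abs_self (v - α), le_refl (|v-α|), (le_abs_self (v-α))]
    · linarith [abs_nonneg (v - α), le_abs_self (v - β)]
  have hfint : ∀ a b : ℝ, IntervalIntegrable f volume a b := by
    intro a b
    rw [intervalIntegrable_iff]
    apply Measure.integrableOn_of_bounded
    · rw [Set.uIoc]; exact measure_Ioc_lt_top.ne
    · exact hf_meas.aestronglyMeasurable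
    · exact ae_of_all _ hfb
  have hm0 : ∀ᵐ s : ℝ, s ≠ m := by
    have hs : {s : ℝ | ¬ s ≠ m} = {m} := by ext s; simp
    rw [ae_iff, hs]; exact measure_singleton m
  have hq0 : ∀ᵐ s : ℝ, s ≠ ε * (k + 5/4) := by
    have hs : {s : ℝ | ¬ s ≠ ε * (k + 5/4)} = {ε * (k + 5/4)} := by ext s; simp
    rw [ae_iff, hs]; exact measure_singleton _
  have key1 : ∀ x ∈ Icc p m, (∫ s in p..x, f s) = (v - β) * (x - p) := by
    intro x hx
    have hcg : ∀ᵐ s : ℝ, s ∈ Set.uIoc p x → f s = v - β := by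
      filter_upwards [hm0] with s hsm hsI
      rw [Set.uIoc_of_le hx.1] at hsI
      have hsm' : s < m := lt_of_le_of_ne (le_trans hsI.2 hx.2) hsm
      show v - g α β (s / ε) = v - β
      have hb : g α β (s / ε) = β := by
        apply g_lo α β (k := k)
        · rw [lt_div_iff₀ hε0]; linarith [hsI.1]
        · rw [div_lt_iff₀ hε0]; rw [hmdef] at hsm'; linarith
      rw [hb]
    calc (∫ s in p..x, f s) = ∫ _ in p..x, (v - β) := intervalIntegral.integral_congr_ae hcg
      _ = (v - β) * (x - p) := by rw [intervalIntegral.integral_const, smul_eq_mul]; ring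
  have key2 : ∀ x ∈ Icc m q, (∫ s in m..x, f s) = (v - α) * (x - m) := by
    intro x hx
    have hcg : ∀ᵐ s : ℝ, s ∈ Set.uIoc m x → f s = v - α := by
      filter_upwards [hq0] with s hsq hsI
      rw [Set.uIoc_of_le hx.1] at hsI
      have hsq' : s < ε * (k + 5/4) := lt_of_le_of_ne (le_trans hsI.2 (le_trans hx.2 h4)) hsq
      show v - g α β (s / ε) = v - α
      have hb : g α β (s / ε) = α := by
        apply g_hi α β (k := k)
        · rw [lt_div_iff₀ hε0]; have := hsI.1; rw [hmdef] at this; linarith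
        · rw [div_lt_iff₀ hε0]; linarith
      rw [hb]
    calc (∫ s in m..x, f s) = ∫ _ in m..x, (v - α) := intervalIntegral.integral_congr_ae hcg
      _ = (v - α) * (x - m) := by rw [intervalIntegral.integral_const, smul_eq_mul]; ring
  have hnval : ∀ x : ℝ, n x = 1 + ∫ s in p..x, f s := by
    intro x; rw [hn]
  have n1 : ∀ x ∈ Icc p m, n x = 1 + (v - β) * (x - p) := by
    intro x hx; rw [hnval, key1 x hx]
  have nm : n m = 1 + (v - β) * lβ := by
    rw [n1 m ⟨h2, le_refl m⟩, hlβ]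
  have n2 : ∀ x ∈ Icc m q, n x = n m + (v - α) * (x - m) := by
    intro x hx
    have h := intervalIntegral.integral_interval_sub_left (hfint p x) (hfint p m)
    have hnx : n x - n m = ∫ s in m..x, f s := by
      rw [hnval, hnval]; linarith
    rw [key2 x hx] at hnx; linarith
  have hq : (v - β) * lβ + (v - α) * lα = 0 := by
    linear_combination hvmul + v * hsum
  have nq : n q = 1 := by
    have h := n2 q ⟨h3, le_refl q⟩
    rw [nm] at h
    have hqm : q - m = lα := by rw [hlα]
    rw [hqm] at h; linarith
  have hvβmul : (v - β) * (q - p) = (α - β) * lα := by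
    linear_combination hvmul + β * hsum
  have hvαmul : (v - α) * (q - p) = (β - α) * lβ := by
    linear_combination hvmul + α * hsum
  have hvβ : v - β ≤ 0 := by
    nlinarith [hvβmul, hℓ, mul_nonneg hβα.le hlα0]
  have hvα : 0 ≤ v - α := by
    nlinarith [hvαmul, hℓ, mul_nonneg hβα.le hlβ0]
  have hmin : -1 ≤ 1 + (v - β) * lβ := by
    have hsq : (q - p)^2 = (lα + lβ)^2 := by rw [hsum]
    have h4ab : 4 * (lα * lβ) ≤ (q - p)^2 := by nlinarith [sq_nonneg (lα - lβ), hsq]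
    have s1 : (β - α) * (4 * (lα * lβ)) ≤ (β - α) * (q - p)^2 :=
      mul_le_mul_of_nonneg_left h4ab hβα.le
    have s2 : (β - α) * (q - p)^2 < (β - α) * (ε * (q - p)) := by
      apply mul_lt_mul_of_pos_left _ hβα
      nlinarith [hl, hℓ]
    have s3 : (β - α) * (ε * (q - p)) < 8 * (q - p) := by
      have := mul_lt_mul_of_pos_right hεβ hℓ
      nlinarith [this]
    have s4 : (β - α) * (lα * lβ) < 2 * (q - p) := by linarith [s1, s2, s3]
    have s5 : ((β - v) * lβ) * (q - p) = (β - α) * (lα * lβ) := by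
      linear_combination (-lβ) * hvβmul
    have s6 : (β - v) * lβ < 2 := by
      by_contra hcon
      push_neg at hcon
      have h7 : 2 * (q - p) ≤ ((β - v) * lβ) * (q - p) :=
        mul_le_mul_of_nonneg_right hcon hℓ.le
      rw [s5] at h7; linarith
    linarith
  have hbdd : ∀ x ∈ Icc p q, -1 ≤ n x ∧ n x ≤ 1 := by
    intro x hx
    rcases le_total x m with hxm | hmx
    · rw [n1 x ⟨hx.1, hxm⟩]
      constructor
      · have hxp : x - p ≤ lβ := by rw [hlβ]; linarith [hx.1]
        have := mul_le_mul_of_nonpos_left hxp hvβ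
        linarith
      · have := mul_nonpos_of_nonpos_of_nonneg hvβ (sub_nonneg.mpr hx.1)
        linarith
    · rw [n2 x ⟨hmx, hx.2⟩, nm]
      constructor
      · have := mul_nonneg hvα (sub_nonneg.mpr hmx)
        linarith
      · have hxq : x - m ≤ lα := by rw [hlα]; linarith [hx.2]
        have := mul_le_mul_of_nonneg_left hxq hvα
        linarith
  have np1 : n p = 1 := by
    rw [n1 p ⟨le_refl p, h2⟩]; ring
  have hC0 : (0:ℝ) ≤ |v - α| + |v - β| := by positivity
  have hlip : LipschitzOnWith ⟨|v - α| + |v - β|, hC0⟩ n (Icc p q) := by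
    apply LipschitzOnWith.of_dist_le_mul
    intro x _ y _
    have h := intervalIntegral.integral_interval_sub_left (hfint p x) (hfint p y)
    have hsub : n x - n y = ∫ s in y..x, f s := by
      rw [hnval, hnval]; linarith
    calc dist (n x) (n y) = ‖∫ s in y..x, f s‖ := by
          rw [Real.dist_eq, hsub]; exact (Real.norm_eq_abs _).symm
      _ ≤ (|v - α| + |v - β|) * |x - y| :=
          intervalIntegral.norm_integral_le_of_norm_le_const (fun s _ => hfb s)
      _ = (⟨|v - α| + |v - β|, hC0⟩ : NNReal) * dist x y := by
          rw [Real.dist_eq]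
  have hae : ∀ᵐ x ∂(volume.restrict (Icc p q)), HasDerivAt n (v - g α β (x / ε)) x := by
    have hmem' : ∀ᵐ x ∂(volume.restrict (Icc p q)), x ∈ Icc p q :=
      ae_restrict_mem measurableSet_Icc
    have hfin : ∀ᵐ x ∂(volume.restrict (Icc p q)), x ∉ ({p, m, q} : Set ℝ) := by
      apply ae_restrict_of_ae
      exact measure_eq_zero_iff_ae_notMem.mp
        ((((Set.finite_singleton q).insert m).insert p).measure_zero volume)
    filter_upwards [hmem', hfin] with x hx hx3
    simp only [Set.mem_insert_iff, Set.mem_singleton_iff, not_or] at hx3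
    obtain ⟨hxp, hxm, hxq⟩ := hx3
    rcases lt_trichotomy x m with hlt | heq | hgt
    · have hx1 : p < x := lt_of_le_of_ne hx.1 (Ne.symm hxp)
      have hev : ∀ᶠ s in nhds x, f s = v - β := by
        filter_upwards [Ioo_mem_nhds hx1 hlt] with s hs
        show v - g α β (s / ε) = v - β
        have hb : g α β (s / ε) = β := by
          apply g_lo α β (k := k)
          · rw [lt_div_iff₀ hε0]; linarith [hs.1]
          · rw [div_lt_iff₀ hε0]; have := hs.2; rw [hmdef] at this; linarith
        rw [hb]
      have hcont : ContinuousAt f x := Filter.EventuallyEq.continuousAt hev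
      have hd : HasDerivAt (fun y => ∫ s in p..y, f s) (f x) x :=
        intervalIntegral.integral_hasDerivAt_right (hfint p x)
          hf_meas.stronglyMeasurable.stronglyMeasurableAtFilter hcont
      have hdn : HasDerivAt n (f x) x := by
        rw [hn]; exact hd.const_add 1
      simpa only [hfdef] using hdn
    · exact absurd heq hxm
    · have hx2 : x < q := lt_of_le_of_ne hx.2 hxq
      have hev : ∀ᶠ s in nhds x, f s = v - α := by
        filter_upwards [Ioo_mem_nhds hgt (lt_of_lt_of_le hx2 h4)] with s hs
        show v - g α β (s / ε) = v - α
        have hb : g α β (s / ε) = α := by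
          apply g_hi α β (k := k)
          · rw [lt_div_iff₀ hε0]; have := hs.1; rw [hmdef] at this; linarith
          · rw [div_lt_iff₀ hε0]; linarith [hs.2]
        rw [hb]
      have hcont : ContinuousAt f x := Filter.EventuallyEq.continuousAt hev
      have hd : HasDerivAt (fun y => ∫ s in p..y, f s) (f x) x :=
        intervalIntegral.integral_hasDerivAt_right (hfint p x)
          hf_meas.stronglyMeasurable.stronglyMeasurableAtFilter hcont
      have hdn : HasDerivAt n (f x) x := by
        rw [hn]; exact hd.const_add 1
      simpa only [hfdef] using hdn
  refine ⟨nq, hbdd, ⟨⟨_, hlip⟩, fun x hx => ⟨(hbdd x hx).1, (hbdd x hx).2⟩, np1, nq, hae⟩, ?_⟩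
  rw [hv, hsum]
end

section
/- Let α < 0 < β, 0 < ε < 8/(β−α), and let p < q with ℓ := q − p ≥ ε, p ∈ ε(1/4 + ℤ) and q ∈ ε(3/4 + ℤ). Set v := −2/ℓ + (α+β)/2 + (β−α)ε/(4ℓ). Then the function n(x) := 1 + ∫_p^x (v − g(s/ε)) ds satisfies n(q) = −1 and −1 ≤ n(x) ≤ 1 for every x ∈ [p,q]; in particular the edge [p,q] with endpoint values n(p) = 1, n(q) = −1 (a concave horizontal edge with left endpoint on εI_{α,β} and right endpoint on εI_{β,α}) is calibrable with velocity v. -/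
open MeasureTheory Set

lemma round_eq_of_abs_lt' {y : ℝ} {k : ℤ} (h1 : (k:ℝ) - 1/2 ≤ y) (h2 : y < (k:ℝ) + 1/2) :
    round y = k := by
  rw [round_eq, Int.floor_eq_iff]
  constructor <;> push_cast <;> linarith

lemma g_eq_alpha (α β y : ℝ) (k : ℤ) (h : |y - k| < 1/4) : g α β y = α := by
  rw [abs_lt] at h
  have hr : round y = k := round_eq_of_abs_lt' (by linarith) (by linarith)
  rw [g, hr, if_pos (by rw [abs_le]; constructor <;> linarith)]

lemma g_eq_beta (α β y : ℝ) (k : ℤ) (h1 : (k:ℝ) + 1/4 < y) (h2 : y < (k:ℝ) + 3/4) :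
    g α β y = β := by
  rcases lt_or_ge y ((k:ℝ) + 1/2) with h | h
  · have hr : round y = k := round_eq_of_abs_lt' (by linarith) (by linarith)
    rw [g, hr, if_neg]
    rw [not_le, lt_abs]
    left; linarith
  · have hr : round y = k + 1 := by
      rw [round_eq, Int.floor_eq_iff]
      constructor <;> push_cast <;> linarith
    rw [g, hr, if_neg]
    rw [not_le, lt_abs]
    right; push_cast; linarith

set_option maxHeartbeats 1000000 in
theorem stmt5 (α β ε p q v : ℝ) (hα : α < 0) (hβ : 0 < β)
    (hε0 : 0 < ε) (hε : ε < 8 / (β - α)) (hpq : p < q) (hl : ε ≤ q - p)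
    (hp : ∃ k : ℤ, p = ε * (1/4 + k)) (hq : ∃ k : ℤ, q = ε * (3/4 + k))
    (hv : v = -2 / (q - p) + (α + β) / 2 + (β - α) * ε / (4 * (q - p)))
    (n : ℝ → ℝ) (hn : n = fun x => 1 + ∫ s in p..x, (v - g α β (s / ε))) :
    n q = -1 ∧ (∀ x ∈ Icc p q, -1 ≤ n x ∧ n x ≤ 1) ∧
    Calibrates α β ε p q 1 (-1) v n := by
  obtain ⟨k₁, hpk⟩ := hp
  obtain ⟨k₂, hqk⟩ := hq
  set f : ℝ → ℝ := fun s => v - g α β (s / ε) with hfdef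
  have hβα : 0 < β - α := by linarith
  have hε8 : (β - α) * ε < 8 := by
    rw [lt_div_iff₀ hβα] at hε; linarith
  have hℓpos : 0 < q - p := by linarith
  have hℓne : q - p ≠ 0 := ne_of_gt hℓpos
  have hv' : v * (q - p) = -2 + (α + β) * (q - p) / 2 + (β - α) * ε / 4 := by
    rw [hv]; field_simp
  -- number of periods
  have hqp : q - p = ε * (1/2 + ((k₂ - k₁ : ℤ) : ℝ)) := by
    rw [hpk, hqk]; push_cast; ring
  have hc : (1:ℝ)/2 ≤ ((k₂ - k₁ : ℤ) : ℝ) := by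
    by_contra h
    push_neg at h
    nlinarith [mul_pos hε0 (by linarith : (0:ℝ) < 1/2 - ((k₂ - k₁ : ℤ) : ℝ))]
  have hm1 : (1:ℤ) ≤ k₂ - k₁ := by
    have h0 : (0:ℤ) < k₂ - k₁ := by exact_mod_cast (by linarith : (0:ℝ) < ((k₂ - k₁ : ℤ):ℝ))
    omega
  obtain ⟨M, hMdef⟩ : ∃ M : ℕ, M = (k₂ - k₁).toNat := ⟨_, rfl⟩
  have hMcast : ((M:ℤ)) = k₂ - k₁ := by rw [hMdef]; exact Int.toNat_of_nonneg (by omega)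
  have hMR : ((M:ℝ)) = ((k₂ - k₁ : ℤ):ℝ) := by exact_mod_cast congrArg (Int.cast : ℤ → ℝ) hMcast
  have hM1 : 1 ≤ M := by omega
  have hqp' : q - p = ε * ((M:ℝ) + 1/2) := by rw [hqp, hMR]; ring
  obtain ⟨D, hDdef⟩ : ∃ D : ℝ, D = ε * v - ε * (α + β) / 2 := ⟨_, rfl⟩
  obtain ⟨B, hBdef⟩ : ∃ B : ℝ, B = ε / 2 * (v - β) := ⟨_, rfl⟩
  obtain ⟨A, hAdef⟩ : ∃ A : ℝ, A = ε / 2 * (v - α) := ⟨_, rfl⟩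
  have hDneg : D < 0 := by
    have h1 : D * (q - p) = ε * (-2 + (β - α) * ε / 4) := by
      rw [hDdef]; linear_combination ε * hv'
    have h2 : ε * (-2 + (β - α) * ε / 4) < 0 :=
      mul_neg_of_pos_of_neg hε0 (by linarith)
    have hmul : D * (q - p) < 0 := h1 ▸ h2
    rcases mul_neg_iff.mp hmul with ⟨_, h⟩ | ⟨h, _⟩
    · linarith
    · exact h
  have hvβ : v - β < 0 := by
    have h2 : (α - β) * (q - p) < 0 := mul_neg_of_neg_of_pos (by linarith) hℓpos
    have hmul : (v - β) * (q - p) < 0 := by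
      have h1 : (v - β) * (q - p) = -2 + (α - β) * (q - p) / 2 + (β - α) * ε / 4 := by
        linear_combination hv'
      rw [h1]; linarith
    rcases mul_neg_iff.mp hmul with ⟨_, h⟩ | ⟨h, _⟩
    · linarith
    · exact h
  have hBneg : B < 0 := by
    rw [hBdef]; exact mul_neg_of_pos_of_neg (by linarith) hvβ
  have hkey : (M:ℝ) * D + B = -2 := by
    have h1 : (M:ℝ) * ε = (q - p) - ε/2 := by linear_combination -hqp'
    rw [hDdef, hBdef]
    linear_combination hv' + (v - (α+β)/2) * h1
  have hDBA : D = B + A := by rw [hDdef, hBdef, hAdef]; ring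
  -- basic function facts
  have hnx : ∀ x, n x = 1 + ∫ s in p..x, f s := fun x => by rw [hn]
  have hgval : ∀ y : ℝ, g α β y = α ∨ g α β y = β := by
    intro y; rw [g]; split <;> simp
  have hfb : ∀ s : ℝ, ‖f s‖ ≤ |v| + |α| + |β| := by
    intro s
    have hfs : f s = v - g α β (s/ε) := rfl
    rw [Real.norm_eq_abs, hfs]
    rcases hgval (s/ε) with h | h <;> rw [h] <;>
      [ (calc |v - α| ≤ |v| + |α| := abs_sub _ _
          _ ≤ |v| + |α| + |β| := by linarith [abs_nonneg β]);
        (calc |v - β| ≤ |v| + |β| := abs_sub _ _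
          _ ≤ |v| + |α| + |β| := by linarith [abs_nonneg α])]
  have hmeasf : Measurable f := by
    have hround : Measurable (fun x : ℝ => ((round x : ℤ) : ℝ)) := by
      have h1 : Measurable (fun x : ℝ => (⌊x + 1/2⌋ : ℤ)) :=
        Int.measurable_floor.comp (measurable_id.add_const _)
      have h2 : Measurable (fun z : ℤ => (z : ℝ)) := measurable_from_top
      simpa [round_eq, Function.comp_def] using h2.comp h1
    have hg : Measurable (g α β) := by
      apply Measurable.ite _ measurable_const measurable_const
      exact measurableSet_le ((measurable_id.sub hround).abs) measurable_const
    exact measurable_const.sub (hg.comp (measurable_id.div_const ε))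
  have hint : ∀ a b : ℝ, IntervalIntegrable f volume a b := by
    intro a b
    rw [intervalIntegrable_iff]
    refine Integrable.mono' (g := fun _ => |v| + |α| + |β|)
      ((integrableOn_const_iff (C := |v| + |α| + |β|)).mpr (Or.inr ?_)) hmeasf.aestronglyMeasurable.restrict
      (Filter.Eventually.of_forall hfb)
    rcases le_total a b with h | h
    · rw [uIoc_of_le h]; exact measure_Ioc_lt_top
    · rw [uIoc_of_ge h]; exact measure_Ioc_lt_top
  have hsub : ∀ x y : ℝ, n x - n y = ∫ s in y..x, f s := by
    intro x y
    rw [hnx, hnx, ← intervalIntegral.integral_add_adjacent_intervals (hint p y) (hint y x)]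
    ring
  have hseg : ∀ a b c : ℝ, (∀ s ∈ Ioo a b, f s = c) → ∀ x ∈ Icc a b,
      n x = n a + c * (x - a) := by
    intro a b c hcnst x hx
    have h2 : (∫ s in a..x, f s) = ∫ s in a..x, (fun _ => c) s := by
      apply intervalIntegral.integral_congr_ae
      have hone : ∀ᵐ s ∂(volume : Measure ℝ), s ≠ x := by
        rw [ae_iff]
        simpa using measure_singleton x
      filter_upwards [hone] with s hs hmem
      rw [uIoc_of_le hx.1] at hmem
      exact hcnst s ⟨hmem.1, lt_of_lt_of_le (lt_of_le_of_ne hmem.2 hs) hx.2⟩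
    have h3 := hsub x a
    rw [h2, intervalIntegral.integral_const, smul_eq_mul] at h3
    linarith [h3, mul_comm (x - a) c]
  -- constancy on segments
  have hconstβ : ∀ j : ℕ, ∀ s ∈ Ioo (p + j*ε) (p + j*ε + ε/2), f s = v - β := by
    intro j s hs
    have e1 : (((k₁ + j : ℤ):ℝ) + 1/4) * ε = p + j*ε := by rw [hpk]; push_cast; ring
    have e2 : (((k₁ + j : ℤ):ℝ) + 3/4) * ε = p + j*ε + ε/2 := by rw [hpk]; push_cast; ring
    have h2 : ((k₁ + j : ℤ):ℝ) + 1/4 < s/ε := by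
      rw [lt_div_iff₀ hε0, e1]; exact hs.1
    have h3 : s/ε < ((k₁ + j : ℤ):ℝ) + 3/4 := by
      rw [div_lt_iff₀ hε0, e2]; exact hs.2
    show v - g α β (s/ε) = v - β
    rw [g_eq_beta α β _ (k₁ + j) h2 h3]
  have hconstα : ∀ j : ℕ, ∀ s ∈ Ioo (p + j*ε + ε/2) (p + (j+1:ℕ)*ε), f s = v - α := by
    intro j s hs
    have e1 : (((k₁ + j + 1 : ℤ):ℝ) - 1/4) * ε = p + j*ε + ε/2 := by rw [hpk]; push_cast; ring
    have e2 : (((k₁ + j + 1 : ℤ):ℝ) + 1/4) * ε = p + (j+1:ℕ)*ε := by rw [hpk]; push_cast; ring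
    have h2 : ((k₁ + j + 1 : ℤ):ℝ) - 1/4 < s/ε := by
      rw [lt_div_iff₀ hε0, e1]; exact hs.1
    have h3 : s/ε < ((k₁ + j + 1 : ℤ):ℝ) + 1/4 := by
      rw [div_lt_iff₀ hε0, e2]; exact hs.2
    show v - g α β (s/ε) = v - α
    rw [g_eq_alpha α β _ (k₁ + j + 1) (by rw [abs_lt]; constructor <;> linarith)]
  -- values at grid points
  have hnp : n p = 1 := by rw [hnx]; simp
  have hPt : ∀ j : ℕ, n (p + j*ε) = 1 + j * D := by
    intro j
    induction j with
    | zero => simpa using hnp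
    | succ j ih =>
      have e1 : n (p + j*ε + ε/2) = n (p + j*ε) + (v - β)*(ε/2) := by
        have h := hseg _ _ _ (hconstβ j) (p + j*ε + ε/2) ⟨by linarith, le_refl _⟩
        rw [show (p + j*ε + ε/2) - (p + j*ε) = ε/2 by ring] at h
        exact h
      have e2 : n (p + (j+1:ℕ)*ε) = n (p + j*ε + ε/2) + (v - α)*(ε/2) := by
        have h := hseg _ _ _ (hconstα j) (p + (j+1:ℕ)*ε) ⟨by push_cast; linarith, le_refl _⟩
        rw [show (p + (j+1:ℕ)*ε) - (p + j*ε + ε/2) = ε/2 by push_cast; ring] at h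
        exact h
      rw [e2, e1, ih, hDdef]
      push_cast
      ring
  have hPmid : ∀ j : ℕ, n (p + j*ε + ε/2) = 1 + j * D + B := by
    intro j
    have h := hseg _ _ _ (hconstβ j) (p + j*ε + ε/2) ⟨by linarith, le_refl _⟩
    rw [show (p + j*ε + ε/2) - (p + j*ε) = ε/2 by ring, hPt j] at h
    rw [h, hBdef]; ring
  have hqx : q = p + M*ε + ε/2 := by linear_combination hqp'
  have hnq : n q = -1 := by
    rw [hqx, hPmid M]
    linarith [hkey]
  -- bounds on segments
  have hbβ : ∀ j : ℕ, j ≤ M → ∀ x ∈ Icc (p + j*ε) (p + j*ε + ε/2),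
      -1 ≤ n x ∧ n x ≤ 1 := by
    intro j hj x hmem
    have hnval : n x = 1 + j*D + (v-β)*(x - (p + j*ε)) := by
      rw [hseg _ _ _ (hconstβ j) x hmem, hPt j]
    have hs0 : 0 ≤ x - (p + j*ε) := by linarith [hmem.1]
    have hs1 : x - (p + j*ε) ≤ ε/2 := by linarith [hmem.2]
    have hjM : (j:ℝ) ≤ (M:ℝ) := Nat.cast_le.mpr hj
    have hMD : (M:ℝ)*D ≤ (j:ℝ)*D := mul_le_mul_of_nonpos_right hjM hDneg.le
    have hjD : (j:ℝ)*D ≤ 0 := mul_nonpos_iff.mpr (Or.inl ⟨Nat.cast_nonneg j, hDneg.le⟩)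
    have hvs1 : (v-β)*(x - (p + j*ε)) ≤ 0 :=
      mul_nonpos_iff.mpr (Or.inr ⟨hvβ.le, hs0⟩)
    have hvs2 : (v-β)*(ε/2) ≤ (v-β)*(x - (p + j*ε)) := mul_le_mul_of_nonpos_left hs1 hvβ.le
    have hBe : (v-β)*(ε/2) = B := by rw [hBdef]; ring
    constructor
    · linarith [hkey]
    · linarith
  have hbα : ∀ j : ℕ, j + 1 ≤ M → ∀ x ∈ Icc (p + j*ε + ε/2) (p + (j+1:ℕ)*ε),
      -1 ≤ n x ∧ n x ≤ 1 := by
    intro j hj x hmem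
    have hnval : n x = 1 + j*D + B + (v-α)*(x - (p + j*ε + ε/2)) := by
      rw [hseg _ _ _ (hconstα j) x hmem, hPmid j]
    have hs0 : 0 ≤ x - (p + j*ε + ε/2) := by linarith [hmem.1]
    have hs1 : x - (p + j*ε + ε/2) ≤ ε/2 := by
      have := hmem.2
      push_cast at this
      linarith
    have hj1 : ((j:ℝ) + 1) ≤ (M:ℝ) := by exact_mod_cast Nat.cast_le.mpr hj
    have hjM : (j:ℝ) ≤ (M:ℝ) := by linarith
    have hMD : (M:ℝ)*D ≤ (j:ℝ)*D := mul_le_mul_of_nonpos_right hjM hDneg.le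
    have hMD1 : (M:ℝ)*D ≤ ((j:ℝ)+1)*D := mul_le_mul_of_nonpos_right hj1 hDneg.le
    have hjD : (j:ℝ)*D ≤ 0 := mul_nonpos_iff.mpr (Or.inl ⟨Nat.cast_nonneg j, hDneg.le⟩)
    have hj1D : ((j:ℝ)+1)*D ≤ 0 :=
      mul_nonpos_iff.mpr (Or.inl ⟨by positivity, hDneg.le⟩)
    have hexp : ((j:ℝ)+1)*D = (j:ℝ)*D + D := by ring
    have hAe : (v-α)*(ε/2) = A := by rw [hAdef]; ring
    rcases le_or_gt 0 (v - α) with hva | hva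
    · have hvs1 : 0 ≤ (v-α)*(x - (p + j*ε + ε/2)) := mul_nonneg hva hs0
      have hvs2 : (v-α)*(x - (p + j*ε + ε/2)) ≤ (v-α)*(ε/2) := mul_le_mul_of_nonneg_left hs1 hva
      constructor
      · linarith [hkey]
      · linarith [hkey]
    · have hvs1 : (v-α)*(x - (p + j*ε + ε/2)) ≤ 0 :=
        mul_nonpos_iff.mpr (Or.inr ⟨hva.le, hs0⟩)
      have hvs2 : (v-α)*(ε/2) ≤ (v-α)*(x - (p + j*ε + ε/2)) := mul_le_mul_of_nonpos_left hs1 hva.le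
      constructor
      · linarith [hkey]
      · linarith
  -- covering
  have hcov : ∀ J : ℕ, ∀ x : ℝ, p ≤ x → x ≤ p + J*ε → J = 0 ∨
      ∃ j : ℕ, j + 1 ≤ J ∧ (x ∈ Icc (p + j*ε) (p + j*ε + ε/2) ∨
        x ∈ Icc (p + j*ε + ε/2) (p + (j+1:ℕ)*ε)) := by
    intro J
    induction J with
    | zero => intro x _ _; left; rfl
    | succ J ih =>
      intro x hx1 hx2
      right
      by_cases h : x ≤ p + J*ε
      · rcases ih x hx1 h with h0 | ⟨j, hj, hmemj⟩
        · subst h0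
          refine ⟨0, by omega, Or.inl ⟨?_, ?_⟩⟩
          · simpa using hx1
          · simp only [Nat.cast_zero, zero_mul, add_zero] at h ⊢
            linarith
        · exact ⟨j, by omega, hmemj⟩
      · push_neg at h
        refine ⟨J, le_refl _, ?_⟩
        by_cases h2 : x ≤ p + J*ε + ε/2
        · left; exact ⟨h.le, h2⟩
        · push_neg at h2
          right
          refine ⟨h2.le, ?_⟩
          push_cast at hx2 ⊢
          linarith
  have hbnd : ∀ x ∈ Icc p q, -1 ≤ n x ∧ n x ≤ 1 := by
    intro x hx
    by_cases hcase : p + M*ε ≤ x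
    · exact hbβ M (le_refl M) x ⟨hcase, by rw [← hqx] at *; linarith [hx.2]⟩
    · push_neg at hcase
      rcases hcov M x hx.1 hcase.le with h0 | ⟨j, hj, hmemj⟩
      · omega
      · rcases hmemj with hm | hm
        · exact hbβ j (by omega) x hm
        · exact hbα j hj x hm
  -- Lipschitz
  have hCnn : (0:ℝ) ≤ |v| + |α| + |β| := by positivity
  have hlip : LipschitzOnWith (|v| + |α| + |β|).toNNReal n (Icc p q) := by
    apply LipschitzOnWith.of_dist_le_mul
    intro x _ y _
    rw [Real.dist_eq, Real.dist_eq, Real.coe_toNNReal _ hCnn]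
    have h1 : |n x - n y| = ‖∫ s in y..x, f s‖ := by
      rw [hsub x y, Real.norm_eq_abs]
    rw [h1]
    have := intervalIntegral.norm_integral_le_of_norm_le_const
      (C := |v| + |α| + |β|) (f := f) (a := y) (b := x) (fun z _ => hfb z)
    exact this
  -- a.e. derivative
  have hae : ∀ᵐ x ∂(volume.restrict (Icc p q)), HasDerivAt n (v - g α β (x / ε)) x := by
    apply ae_restrict_of_ae
    have hE : (volume : Measure ℝ) {x : ℝ | |x/ε - (round (x/ε) : ℝ)| = 1/4} = 0 := by
      apply measure_mono_null (t := ⋃ k : ℤ, ({ε*(k+1/4), ε*(k-1/4)} : Set ℝ))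
      · intro x hx
        simp only [mem_setOf_eq] at hx
        rcases abs_eq (by norm_num : (0:ℝ) ≤ 1/4) |>.mp hx with h | h
        · have hxv : x / ε = (round (x/ε) : ℝ) + 1/4 := by linarith
          have hxe : x = ε * ((round (x/ε) : ℝ) + 1/4) := by
            rw [← hxv]; field_simp
          exact mem_iUnion.mpr ⟨round (x/ε), by
            simp only [mem_insert_iff, mem_singleton_iff]; exact Or.inl hxe⟩
        · have hxv : x / ε = (round (x/ε) : ℝ) - 1/4 := by linarith
          have hxe : x = ε * ((round (x/ε) : ℝ) - 1/4) := by
            rw [← hxv]; field_simp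
          exact mem_iUnion.mpr ⟨round (x/ε), by
            simp only [mem_insert_iff, mem_singleton_iff]; exact Or.inr hxe⟩
      · refine Set.Countable.measure_zero ?_ _
        exact Set.countable_iUnion fun k => (Set.countable_singleton _).insert _
    have h0 : ∀ᵐ x ∂(volume : Measure ℝ), ¬ (|x/ε - (round (x/ε) : ℝ)| = 1/4) := by
      rw [ae_iff]
      simpa using hE
    filter_upwards [h0] with x hx
    -- find a constancy interval around x
    have hmain : ∃ a b c : ℝ, a < x ∧ x < b ∧ ∀ s ∈ Ioo a b, f s = c := by
      set u := x/ε with hu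
      set r := round u with hr
      have hxu : x = ε * u := by rw [hu]; field_simp
      rcases lt_or_gt_of_ne hx with hlt | hgt
      · -- alpha region
        refine ⟨ε*((r:ℝ) - 1/4), ε*((r:ℝ) + 1/4), v - α, ?_, ?_, ?_⟩
        · rw [hxu]; rw [abs_lt] at hlt
          exact mul_lt_mul_of_pos_left (by linarith) hε0
        · rw [hxu]; rw [abs_lt] at hlt
          exact mul_lt_mul_of_pos_left (by linarith) hε0
        · intro s hs
          have h2 : (r:ℝ) - 1/4 < s/ε := by rw [lt_div_iff₀ hε0, mul_comm]; exact hs.1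
          have h3 : s/ε < (r:ℝ) + 1/4 := by rw [div_lt_iff₀ hε0, mul_comm]; exact hs.2
          show v - g α β (s/ε) = v - α
          rw [g_eq_alpha α β _ r (by rw [abs_lt]; constructor <;> linarith)]
      · -- beta region
        have habs : |u - (r:ℝ)| ≤ 1/2 := abs_sub_round u
        rcases le_or_gt (r:ℝ) u with hge | hlt2
        · -- u ∈ (r + 1/4, r + 1/2)
          have h12 : u - (r:ℝ) < 1/2 := by
            rcases lt_or_eq_of_le (by rw [abs_le] at habs; linarith [habs.1, habs.2] :
              u - (r:ℝ) ≤ 1/2) with h | h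
            · exact h
            · exfalso
              have : round u = r + 1 := by
                rw [show u = (r:ℝ) + 1/2 by linarith, round_eq]
                rw [show ((r:ℝ) + 1/2 + 1/2) = ((r+1 : ℤ):ℝ) by push_cast; ring]
                exact Int.floor_intCast _
              omega
          have h14 : 1/4 < u - (r:ℝ) := by
            rcases lt_abs.mp hgt with h | h
            · exact h
            · linarith
          refine ⟨ε*((r:ℝ) + 1/4), ε*((r:ℝ) + 3/4), v - β, ?_, ?_, ?_⟩
          · rw [hxu]; exact mul_lt_mul_of_pos_left (by linarith) hε0
          · rw [hxu]; exact mul_lt_mul_of_pos_left (by linarith) hε0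
          · intro s hs
            have h2 : (r:ℝ) + 1/4 < s/ε := by rw [lt_div_iff₀ hε0, mul_comm]; exact hs.1
            have h3 : s/ε < (r:ℝ) + 3/4 := by rw [div_lt_iff₀ hε0, mul_comm]; exact hs.2
            show v - g α β (s/ε) = v - β
            rw [g_eq_beta α β _ r h2 h3]
        · -- u ∈ [r - 1/2, r - 1/4)
          have h12 : (r:ℝ) - u ≤ 1/2 := by rw [abs_le] at habs; linarith [habs.1]
          have h14 : 1/4 < (r:ℝ) - u := by
            rcases lt_abs.mp hgt with h | h
            · linarith
            · linarith
          refine ⟨ε*(((r - 1 : ℤ):ℝ) + 1/4), ε*(((r - 1 : ℤ):ℝ) + 3/4), v - β, ?_, ?_, ?_⟩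
          · rw [hxu]; push_cast
            exact mul_lt_mul_of_pos_left (by linarith) hε0
          · rw [hxu]; push_cast
            exact mul_lt_mul_of_pos_left (by linarith) hε0
          · intro s hs
            have h2 : ((r - 1 : ℤ):ℝ) + 1/4 < s/ε := by rw [lt_div_iff₀ hε0, mul_comm]; exact hs.1
            have h3 : s/ε < ((r - 1 : ℤ):ℝ) + 3/4 := by rw [div_lt_iff₀ hε0, mul_comm]; exact hs.2
            show v - g α β (s/ε) = v - β
            rw [g_eq_beta α β _ (r - 1) h2 h3]
    obtain ⟨a, b, c, hax, hxb, hcnst⟩ := hmain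
    have hcont : ContinuousAt f x := by
      have hev : f =ᶠ[nhds x] fun _ => c := by
        filter_upwards [Ioo_mem_nhds hax hxb] with s hs
        exact hcnst s hs
      exact hev.continuousAt
    have hd : HasDerivAt (fun u => ∫ s in p..u, f s) (f x) x :=
      intervalIntegral.integral_hasDerivAt_right (hint p x)
        (hmeasf.stronglyMeasurable.stronglyMeasurableAtFilter) hcont
    have : HasDerivAt n (f x) x := by
      rw [hn]
      exact hd.const_add 1
    exact this
  refine ⟨hnq, hbnd, ⟨(|v| + |α| + |β|).toNNReal, hlip⟩, ?_, hnp, hnq, hae⟩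
  intro x hx
  exact Set.mem_Icc.mpr ⟨(hbnd x hx).1, (hbnd x hx).2⟩
end
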